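/- Let n ≥ 3 be an integer, M a finite group of order 3·2^n, P a Sylow 2-subgroup of M, G = Park(M,P) Park's group and ι : M → G Park's embedding, and k an algebraically closed field of characteristic 2. Then the index |G : ι(M)| is a power of 2, and consequently the permutation kG-module k[G/ι(M)] is indecomposable (equivalently, Sc(G, ι(P)) = Ind_{ι(M)}^G(k)). -/

import Mathlib

/-- A module is indecomposable if it is nonzero and is not the direct sum of
two nonzero submodules. -/
def IsIndecomposableModule (R : Type*) (M : Type*) [Semiring R] [AddCommMonoid M]
    [Module R M] : Prop :=
  Nontrivial M ∧ ∀ U W : Submodule R M, IsCompl U W → U = ⊥ ∨ W = ⊥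

/-- The permutation `kG`-module `k[X]` on a `G`-set `X`, as a module over the
group algebra `MonoidAlgebra k G`. -/
abbrev PermutationModule (k G X : Type*) [CommSemiring k] [Monoid G] [MulAction G X] :=
  (Representation.ofMulAction k G X).asModule

/-- Park's group `Park(M, P)`: the group of bijections of `M` commuting with the
right multiplication action of `P`. -/
def parkGroup (M : Type*) [Group M] (P : Subgroup M) : Subgroup (Equiv.Perm M) where
  carrier := {f : Equiv.Perm M | ∀ (m u : M), u ∈ P → f (m * u) = f m * u}
  one_mem' := by intro m u _; rfl
  mul_mem' := by
    intro f g hf hg m u hu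
    simp only [Equiv.Perm.mul_apply]
    rw [hg m u hu, hf _ u hu]
  inv_mem' := by
    intro f hf m u hu
    apply f.injective
    rw [Equiv.Perm.coe_inv, Equiv.apply_symm_apply, hf _ u hu, Equiv.apply_symm_apply]

/-- Park's embedding of `M` into `Park(M, P)`, sending `m` to left translation by `m`. -/
def parkEmbed (M : Type*) [Group M] (P : Subgroup M) : M →* ↥(parkGroup M P) where
  toFun m := ⟨Equiv.mulLeft m, fun x u _ => by simp [mul_assoc]⟩
  map_one' := by
    apply Subtype.ext
    ext x
    simp
  map_mul' m n := by
    apply Subtype.ext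
    ext x
    simp [mul_assoc]

/-- `P` is a Sylow `p`-subgroup of a subgroup `H` of `G`. -/
def IsSylowIn (p : ℕ) {G : Type*} [Group G] (H P : Subgroup G) : Prop :=
  P ≤ H ∧ IsPGroup p P ∧ ∀ Q : Subgroup G, Q ≤ H → IsPGroup p Q → P ≤ Q → Q = P


set_option linter.unusedSectionVars false

section ParkCard

variable {M : Type*} [Group M] {P : Subgroup M}

/-- the induced map on the quotient is independent of coset representative -/
lemma park_mk_eq (f : ↥(parkGroup M P)) {m m' : M} (h : (m : M ⧸ P) = (m' : M ⧸ P)) :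
    ((f.val m : M) : M ⧸ P) = ((f.val m' : M) : M ⧸ P) := by
  rw [QuotientGroup.eq] at h
  have hm : m' = m * (m⁻¹ * m') := by group
  rw [hm, f.2 m (m⁻¹ * m') h, QuotientGroup.mk_mul_of_mem _ h]

lemma park_out_mem (f : ↥(parkGroup M P)) (c : M ⧸ P) :
    (((f.val c.out : M) : M ⧸ P)).out⁻¹ * f.val c.out ∈ P := by
  rw [← QuotientGroup.eq]
  exact QuotientGroup.out_eq' _


lemma park_aux_mem (m : M) : ((m : M ⧸ P)).out⁻¹ * m ∈ P :=
  QuotientGroup.eq.mp (QuotientGroup.out_eq' (m : M ⧸ P))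

variable (P) in
/-- building block for the inverse map -/
noncomputable def parkF (σ : Equiv.Perm (M ⧸ P)) (p : (M ⧸ P) → P) (m : M) : M :=
  (σ (m : M ⧸ P)).out * (p (m : M ⧸ P) : M) * ((m : M ⧸ P)).out⁻¹ * m

lemma parkF_mk (σ : Equiv.Perm (M ⧸ P)) (p : (M ⧸ P) → P) (m : M) :
    ((parkF P σ p m : M) : M ⧸ P) = σ (m : M ⧸ P) := by
  have hmem : (p (m : M ⧸ P) : M) * (((m : M ⧸ P)).out⁻¹ * m) ∈ P :=
    mul_mem (p (m : M ⧸ P)).2 (park_aux_mem m)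
  have : parkF P σ p m = (σ (m : M ⧸ P)).out *
      ((p (m : M ⧸ P) : M) * (((m : M ⧸ P)).out⁻¹ * m)) := by
    unfold parkF; group
  rw [this, QuotientGroup.mk_mul_of_mem _ hmem, QuotientGroup.out_eq']

lemma parkF_cancel_left (σ : Equiv.Perm (M ⧸ P)) (p : (M ⧸ P) → P) (m : M) :
    parkF P σ⁻¹ (fun c => (p (σ⁻¹ c))⁻¹) (parkF P σ p m) = m := by
  have h1 : ((parkF P σ p m : M) : M ⧸ P) = σ (m : M ⧸ P) := parkF_mk σ p m
  unfold parkF at h1 ⊢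
  rw [h1]
  simp only [Equiv.Perm.coe_inv, Equiv.symm_apply_apply, InvMemClass.coe_inv]
  group

lemma parkF_cancel_right (σ : Equiv.Perm (M ⧸ P)) (p : (M ⧸ P) → P) (m : M) :
    parkF P σ p (parkF P σ⁻¹ (fun c => (p (σ⁻¹ c))⁻¹) m) = m := by
  have h1 : ((parkF P σ⁻¹ (fun c => (p (σ⁻¹ c))⁻¹) m : M) : M ⧸ P) = σ⁻¹ (m : M ⧸ P) :=
    parkF_mk σ⁻¹ _ m
  unfold parkF at h1 ⊢
  rw [h1]
  simp only [Equiv.Perm.coe_inv, Equiv.apply_symm_apply, InvMemClass.coe_inv]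
  group

lemma parkF_mem (σ : Equiv.Perm (M ⧸ P)) (p : (M ⧸ P) → P) (m u : M) (hu : u ∈ P) :
    parkF P σ p (m * u) = parkF P σ p m * u := by
  unfold parkF
  rw [QuotientGroup.mk_mul_of_mem m hu]
  group

/-- Park's group is in bijection with `Perm (M ⧸ P) × ((M ⧸ P) → P)`. -/
noncomputable def parkEquiv : ↥(parkGroup M P) ≃ Equiv.Perm (M ⧸ P) × ((M ⧸ P) → P) where
  toFun f :=
    (⟨fun c => ((f.val c.out : M) : M ⧸ P), fun c => ((f⁻¹.val c.out : M) : M ⧸ P),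
      fun c => by
        have h1 : ((((f.val c.out : M) : M ⧸ P)).out : M ⧸ P) = ((f.val c.out : M) : M ⧸ P) :=
          QuotientGroup.out_eq' _
        have h2 := park_mk_eq f⁻¹ h1
        have h3 : f⁻¹.val (f.val c.out) = c.out := by
          simp [Subgroup.coe_inv]
        rw [h3] at h2
        exact h2.trans (QuotientGroup.out_eq' _),
      fun c => by
        have h1 : ((((f⁻¹.val c.out : M) : M ⧸ P)).out : M ⧸ P) = ((f⁻¹.val c.out : M) : M ⧸ P) :=
          QuotientGroup.out_eq' _
        have h2 := park_mk_eq f h1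
        have h3 : f.val (f⁻¹.val c.out) = c.out := by
          simp [Subgroup.coe_inv]
        rw [h3] at h2
        exact h2.trans (QuotientGroup.out_eq' _)⟩,
     fun c => ⟨(((f.val c.out : M) : M ⧸ P)).out⁻¹ * f.val c.out, park_out_mem f c⟩)
  invFun := fun (σ, p) =>
    ⟨⟨parkF P σ p, parkF P σ⁻¹ (fun c => (p (σ⁻¹ c))⁻¹),
      fun m => parkF_cancel_left σ p m, fun m => parkF_cancel_right σ p m⟩,
      fun m u hu => parkF_mem σ p m u hu⟩
  left_inv := by
    intro f
    apply Subtype.ext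
    apply Equiv.ext
    intro m
    dsimp only
    have h := f.2 ((m : M ⧸ P)).out (((m : M ⧸ P)).out⁻¹ * m) (park_aux_mem m)
    rw [mul_inv_cancel_left] at h
    rw [h]
    unfold parkF
    erw [Equiv.coe_fn_mk, Equiv.coe_fn_mk]
    group
  right_inv := by
    intro ⟨σ, p⟩
    refine Prod.ext ?_ ?_
    · apply Equiv.ext
      intro c
      dsimp only [Equiv.coe_fn_mk]
      rw [parkF_mk, QuotientGroup.out_eq']
    · funext c
      apply Subtype.ext
      dsimp only [Equiv.coe_fn_mk]
      have h1 : ((parkF P σ p c.out : M) : M ⧸ P) = σ c := by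
        rw [parkF_mk, QuotientGroup.out_eq']
      rw [h1]
      unfold parkF
      rw [QuotientGroup.out_eq']
      group

end ParkCard

lemma park_card (M : Type*) [Group M] [Finite M] (P : Subgroup M) :
    Nat.card ↥(parkGroup M P) =
      (Nat.card (M ⧸ P)).factorial * Nat.card P ^ Nat.card (M ⧸ P) := by
  classical
  have := Fintype.ofFinite (M ⧸ P)
  rw [Nat.card_congr (parkEquiv (M := M) (P := P)), Nat.card_prod, Nat.card_fun]
  congr 1
  rw [Nat.card_eq_fintype_card, Fintype.card_perm, Nat.card_eq_fintype_card]

lemma parkEmbed_injective (M : Type*) [Group M] (P : Subgroup M) :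
    Function.Injective (parkEmbed M P) := by
  intro a b h
  have h1 : (parkEmbed M P a).val 1 = (parkEmbed M P b).val 1 := by rw [h]
  simpa [parkEmbed] using h1

lemma park_index (n : ℕ) (M : Type*) [Group M] [Finite M] (hM : Nat.card M = 3 * 2 ^ n)
    (P : Subgroup M) (hsyl : IsSylowIn 2 ⊤ P) :
    ((parkEmbed M P).range).index = 2 ^ (2 * n + 1) := by
  have : Fact (Nat.Prime 2) := ⟨Nat.prime_two⟩
  let S : Sylow 2 M := ⟨P, hsyl.2.1, fun {Q} hQ hle => hsyl.2.2 Q le_top hQ hle⟩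
  have hP : Nat.card P = 2 ^ n := by
    have h := S.card_eq_multiplicity
    rw [hM] at h
    have h3 : (3 * 2 ^ n).factorization 2 = n := by
      rw [Nat.factorization_mul (by norm_num) (pow_ne_zero n two_ne_zero)]
      simp only [Finsupp.coe_add, Pi.add_apply]
      rw [Nat.factorization_eq_zero_of_not_dvd (by norm_num), Nat.prime_two.factorization_pow]
      simp
    rw [h3] at h
    exact h
  have hidx : P.index = 3 := by
    have h := Subgroup.card_mul_index P
    rw [hP, hM] at h
    exact Nat.eq_of_mul_eq_mul_left (pow_pos two_pos n) (by omega)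
  have hQ : Nat.card (M ⧸ P) = 3 := by rw [← Subgroup.index_eq_card]; exact hidx
  have hG : Nat.card ↥(parkGroup M P) = 3 * 2 ^ n * 2 ^ (2 * n + 1) := by
    rw [park_card M P, hQ, hP, ← pow_mul]
    rw [show (3:ℕ).factorial = 6 from rfl]
    rw [show 3 * 2 ^ n * 2 ^ (2 * n + 1) = 3 * 2 ^ (n + (2 * n + 1)) by rw [pow_add]; ring]
    rw [show n + (2 * n + 1) = n * 3 + 1 by omega, pow_succ]
    ring
  have hrange : Nat.card ((parkEmbed M P).range) = 3 * 2 ^ n := by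
    rw [← hM]
    exact (Nat.card_congr (MonoidHom.ofInjective (parkEmbed_injective M P)).toEquiv).symm
  have h := Subgroup.card_mul_index (parkEmbed M P).range
  rw [hrange, hG] at h
  exact Nat.eq_of_mul_eq_mul_left (by positivity) h

section Indec

variable {G : Type*} [Group G] [Finite G] {H : Subgroup G}

/-- A Sylow 2-subgroup acts transitively on `G ⧸ H` when `H` has 2-power index. -/
lemma sylow_transitive (m : ℕ) (hm : H.index = 2 ^ m) (T : Subgroup G)
    (hTcard : Nat.card T = 2 ^ (Nat.card G).factorization 2) :
    ∀ x : G ⧸ H, ∃ s : T, (s : G) • ((1 : G) : G ⧸ H) = x := by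
  have hp : Fact (Nat.Prime 2) := ⟨Nat.prime_two⟩
  set x₀ : G ⧸ H := ((1 : G) : G ⧸ H) with hx₀
  set st := MulAction.stabilizer T x₀ with hst
  have hstP : IsPGroup 2 ↥st := by
    have hT2 : IsPGroup 2 ↥T := IsPGroup.of_card hTcard
    exact hT2.to_subgroup st
  obtain ⟨b, hb⟩ := IsPGroup.iff_card.mp hstP
  have hmem : ∀ s : T, s ∈ st → (s : G) ∈ H := by
    intro s hs
    have h1 : (s : G) • x₀ = x₀ := hs
    rw [hx₀, MulAction.Quotient.smul_mk] at h1
    have h2 := QuotientGroup.eq.mp h1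
    simpa using h2
  let φ : ↥st →* ↥H :=
    { toFun := fun s => ⟨((s : T) : G), hmem s.val s.2⟩
      map_one' := rfl
      map_mul' := fun a b => rfl }
  have hφinj : Function.Injective φ := by
    intro a b hab
    have h2 : ((φ a : ↥H) : G) = ((φ b : ↥H) : G) := congrArg Subtype.val hab
    exact Subtype.ext (Subtype.ext h2)
  have hdvd : Nat.card ↥st ∣ Nat.card ↥H := by
    have h1 : Nat.card ↥st = Nat.card φ.range :=
      Nat.card_congr (MonoidHom.ofInjective hφinj).toEquiv
    rw [h1]
    exact Subgroup.card_subgroup_dvd_card φ.range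
  have hHpos : Nat.card H ≠ 0 := Nat.card_pos.ne'
  have hble : b ≤ (Nat.card H).factorization 2 := by
    rw [hb] at hdvd
    exact (Nat.Prime.pow_dvd_iff_le_factorization Nat.prime_two hHpos).mp hdvd
  have hGfac : (Nat.card G).factorization 2 = (Nat.card H).factorization 2 + m := by
    have hcalc : Nat.card G = Nat.card H * 2 ^ m := by
      rw [← hm, Subgroup.card_mul_index]
    rw [hcalc, Nat.factorization_mul hHpos (pow_ne_zero m two_ne_zero)]
    simp [Nat.prime_two.factorization_pow]
  have horbcard : Nat.card ↥st * Nat.card (MulAction.orbit T x₀) = Nat.card ↥T := by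
    rw [Nat.card_congr (MulAction.orbitEquivQuotientStabilizer T x₀), ← hst,
      ← Subgroup.index_eq_card, Subgroup.card_mul_index]
  have horb_ge : 2 ^ m ≤ Nat.card (MulAction.orbit T x₀) := by
    rw [hb, hTcard, hGfac] at horbcard
    have heq : Nat.card (MulAction.orbit T x₀) =
        2 ^ ((Nat.card H).factorization 2 + m - b) := by
      have h2 : (2:ℕ) ^ ((Nat.card H).factorization 2 + m) =
          2 ^ b * 2 ^ ((Nat.card H).factorization 2 + m - b) := by
        rw [← pow_add]; congr 1; omega
      rw [h2] at horbcard
      exact Nat.eq_of_mul_eq_mul_left (pow_pos two_pos b) horbcard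
    rw [heq]
    exact Nat.pow_le_pow_right two_pos (by omega)
  have huniv : MulAction.orbit T x₀ = Set.univ := by
    apply Set.eq_of_subset_of_ncard_le (Set.subset_univ _) _ Set.finite_univ
    rw [Set.ncard_univ, ← Nat.card_coe_set_eq]
    calc Nat.card (G ⧸ H) = 2 ^ m := by rw [← Subgroup.index_eq_card, hm]
    _ ≤ Nat.card (MulAction.orbit T x₀) := horb_ge
  intro x
  have hx : x ∈ MulAction.orbit T x₀ := huniv ▸ Set.mem_univ x
  obtain ⟨s, hs⟩ := hx
  exact ⟨s, hs⟩

section Fixed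

variable {k : Type*} [Field k] [CharP k 2]

local notation "V" => PermutationModule k G (G ⧸ H)
local notation "ρQ" => Representation.ofMulAction k G (G ⧸ H)

lemma permMod_add_self (v : V) : v + v = 0 := by
  calc v + v = (2 : k) • v := (two_smul k v).symm
  _ = (0 : k) • v := by rw [show (2 : k) = 0 from CharTwo.two_eq_zero]
  _ = 0 := zero_smul k v

/-- Any nonzero submodule of the permutation module contains a nonzero vector
fixed by the 2-subgroup `T`. -/
lemma exists_fixed_vector (T : Subgroup G) (hT : IsPGroup 2 ↥T)
    (U : Submodule (MonoidAlgebra k G) V) (hU : U ≠ ⊥) :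
    ∃ v : V, v ∈ U ∧ v ≠ 0 ∧ ∀ s : T, (MonoidAlgebra.single (s : G) (1 : k)) • v = v := by
  have hp : Fact (Nat.Prime 2) := ⟨Nat.prime_two⟩
  obtain ⟨u, huU, hune⟩ := Submodule.exists_mem_ne_zero_of_ne_bot hU
  set O : Set V := Set.range (fun s : T => MonoidAlgebra.single (s : G) (1 : k) • u) with hO
  set V₀ : AddSubgroup V := AddSubgroup.closure O with hV₀
  have hsmul : ∀ (s : T) (v : V), v ∈ V₀ → MonoidAlgebra.single (s : G) (1 : k) • v ∈ V₀ := by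
    intro s v hv
    induction hv using AddSubgroup.closure_induction with
    | mem x hx =>
      obtain ⟨t, rfl⟩ := hx
      rw [smul_smul, MonoidAlgebra.single_mul_single, one_mul]
      exact AddSubgroup.subset_closure ⟨s * t, rfl⟩
    | zero => simpa using AddSubgroup.zero_mem V₀
    | add x y hx hy ihx ihy => rw [smul_add]; exact AddSubgroup.add_mem V₀ ihx ihy
    | neg x hx ihx => rw [smul_neg]; exact AddSubgroup.neg_mem V₀ ihx
  have hfg : AddGroup.FG ↥V₀ := by
    rw [AddGroup.fg_iff_addSubgroup_fg]
    exact (AddSubgroup.fg_iff V₀).mpr ⟨O, rfl, Set.finite_range _⟩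
  have htor : AddMonoid.IsTorsion ↥V₀ := by
    intro x
    refine isOfFinAddOrder_iff_nsmul_eq_zero.mpr ⟨2, two_pos, ?_⟩
    apply Subtype.ext
    push_cast
    rw [two_nsmul]
    exact permMod_add_self x.val
  have hfin : Finite ↥V₀ := AddCommGroup.finite_of_fg_torsion ↥V₀ htor
  letI : MulAction ↥T ↥V₀ :=
    { smul := fun s v => ⟨MonoidAlgebra.single (s : G) (1 : k) • v.val, hsmul s v.val v.2⟩
      one_smul := by
        intro v
        apply Subtype.ext
        show MonoidAlgebra.single ((1 : T) : G) (1 : k) • v.val = v.val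
        rw [OneMemClass.coe_one, ← MonoidAlgebra.one_def, one_smul]
      mul_smul := by
        intro s t v
        apply Subtype.ext
        show MonoidAlgebra.single ((s * t : T) : G) (1 : k) • v.val
            = MonoidAlgebra.single (s : G) (1 : k) • (MonoidAlgebra.single (t : G) (1 : k) • v.val)
        rw [smul_smul, MonoidAlgebra.single_mul_single, one_mul, Subgroup.coe_mul] }
  have hsmul_def : ∀ (s : T) (v : ↥V₀),
      (s • v).val = MonoidAlgebra.single (s : G) (1 : k) • v.val := fun _ _ => rfl
  have huV₀ : u ∈ V₀ := by
    apply AddSubgroup.subset_closure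
    refine ⟨1, ?_⟩
    show MonoidAlgebra.single ((1 : T) : G) (1 : k) • u = u
    rw [OneMemClass.coe_one, ← MonoidAlgebra.one_def, one_smul]
  have hcard2 : 2 ∣ Nat.card ↥V₀ := by
    have h2 : addOrderOf (⟨u, huV₀⟩ : ↥V₀) = 2 := by
      apply addOrderOf_eq_prime
      · apply Subtype.ext
        push_cast
        rw [two_nsmul]
        exact permMod_add_self u
      · intro h
        exact hune (congrArg Subtype.val h)
    rw [← h2]
    exact addOrderOf_dvd_natCard _
  have hmod := hT.card_modEq_card_fixedPoints ↥V₀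
  by_contra hno
  push_neg at hno
  have hfix0 : MulAction.fixedPoints ↥T ↥V₀ = {(0 : ↥V₀)} := by
    apply Set.eq_singleton_iff_unique_mem.mpr
    constructor
    · intro s
      apply Subtype.ext
      rw [hsmul_def]
      exact smul_zero _
    · intro w hw
      by_contra hwne
      have hwval : w.val ∈ U := by
        have hle : V₀ ≤ U.toAddSubgroup := by
          rw [hV₀]
          apply (AddSubgroup.closure_le _).mpr
          rintro _ ⟨s, rfl⟩
          exact U.smul_mem _ huU
        exact hle w.2
      obtain ⟨s, hs⟩ := hno w.val hwval (fun h0 => hwne (Subtype.ext h0))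
      apply hs
      have h6 := hw s
      rw [Subtype.ext_iff, hsmul_def] at h6
      exact h6
  have h1 : Nat.card (MulAction.fixedPoints ↥T ↥V₀) = 1 := by
    rw [hfix0]
    simp
  have h3 : Nat.card ↥V₀ % 2 = 1 % 2 := by
    rw [h1] at hmod
    exact hmod
  omega

/-- main lemma: a permutation module on `G ⧸ H` with `H` of 2-power index in
char 2 is indecomposable. -/
lemma perm_module_indecomposable (m : ℕ) (hm : H.index = 2 ^ m) :
    IsIndecomposableModule (MonoidAlgebra k G) (PermutationModule k G (G ⧸ H)) := by
  have hp : Fact (Nat.Prime 2) := ⟨Nat.prime_two⟩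
  constructor
  · exact Equiv.nontrivial (Representation.asModuleEquiv ρQ).toEquiv
  · intro U W hc
    by_contra hcon
    push_neg at hcon
    obtain ⟨hUne, hWne⟩ := hcon
    obtain ⟨T⟩ : Nonempty (Sylow 2 G) := inferInstance
    have htrans := sylow_transitive m hm (T : Subgroup G) T.card_eq_multiplicity
    obtain ⟨u, huU, hu0, hufix⟩ :=
      exists_fixed_vector (T : Subgroup G) T.isPGroup' U hUne
    obtain ⟨w, hwW, hw0, hwfix⟩ :=
      exists_fixed_vector (T : Subgroup G) T.isPGroup' W hWne
    set x₀ : G ⧸ H := ((1 : G) : G ⧸ H) with hx₀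
    have hconst : ∀ v : V,
        (∀ s : (T : Subgroup G), MonoidAlgebra.single (s : G) (1 : k) • v = v) →
        ∀ x : G ⧸ H, ((Representation.asModuleEquiv ρQ) v).coeff x
          = ((Representation.asModuleEquiv ρQ) v).coeff x₀ := by
      intro v hv x
      obtain ⟨s, hs⟩ := htrans x
      have h5 : ρQ (s : G) ((Representation.asModuleEquiv ρQ) v)
          = (Representation.asModuleEquiv ρQ) v := by
        have h6 := congrArg (Representation.asModuleEquiv ρQ) (hv s)
        rw [Representation.asModuleEquiv_map_smul,
          Representation.asAlgebraHom_single_one] at h6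
        exact h6
      have h7 := congrArg (fun f : MonoidAlgebra k (G ⧸ H) => f.coeff ((s : G) • x₀)) h5
      rw [Representation.coeff_ofMulAction, inv_smul_smul] at h7
      rw [← hs]
      exact h7.symm
    have hune' : ((Representation.asModuleEquiv ρQ) u).coeff x₀ ≠ 0 := by
      intro h0
      apply hu0
      have hz : (Representation.asModuleEquiv ρQ) u = 0 := by
        ext x
        rw [hconst u hufix x, h0]
        simp
      exact (LinearEquiv.map_eq_zero_iff _).mp hz
    have hwne' : ((Representation.asModuleEquiv ρQ) w).coeff x₀ ≠ 0 := by
      intro h0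
      apply hw0
      have hz : (Representation.asModuleEquiv ρQ) w = 0 := by
        ext x
        rw [hconst w hwfix x, h0]
        simp
      exact (LinearEquiv.map_eq_zero_iff _).mp hz
    set a : k := ((Representation.asModuleEquiv ρQ) u).coeff x₀ with ha
    set b : k := ((Representation.asModuleEquiv ρQ) w).coeff x₀ with hb
    have hkey : MonoidAlgebra.single (1 : G) b • u = MonoidAlgebra.single (1 : G) a • w := by
      apply (Representation.asModuleEquiv ρQ).injective
      rw [Representation.asModuleEquiv_map_smul, Representation.asModuleEquiv_map_smul,
        Representation.asAlgebraHom_single, Representation.asAlgebraHom_single, map_one]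
      ext x
      simp only [LinearMap.smul_apply, Module.End.one_apply, MonoidAlgebra.coeff_smul, Finsupp.smul_apply, smul_eq_mul]
      rw [hconst u hufix x, hconst w hwfix x, ← ha, ← hb, mul_comm]
    have hmem : MonoidAlgebra.single (1 : G) b • u ∈ U ⊓ W :=
      ⟨U.smul_mem _ huU, hkey ▸ W.smul_mem _ hwW⟩
    have h0 : MonoidAlgebra.single (1 : G) b • u = 0 := by
      rw [← Submodule.mem_bot (MonoidAlgebra k G), ← hc.disjoint.eq_bot]
      exact hmem
    have h1 := congrArg (fun v : V => ((Representation.asModuleEquiv ρQ) v).coeff x₀) h0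
    rw [Representation.asModuleEquiv_map_smul, Representation.asAlgebraHom_single,
      map_one] at h1
    simp only [LinearMap.smul_apply, Module.End.one_apply, MonoidAlgebra.coeff_smul, Finsupp.smul_apply, smul_eq_mul,
      map_zero, MonoidAlgebra.coeff_zero, Finsupp.coe_zero, Pi.zero_apply] at h1
    rw [← ha] at h1
    exact mul_ne_zero hwne' hune' h1

end Fixed

end Indec

/-- let `M` be a finite group of order `3·2^n` (`n ≥ 3`), `P` a Sylow
`2`-subgroup of `M`, `G = Park(M, P)`, `ι` Park's embedding, and `k` an
algebraically closed field of characteristic `2`.  Then the index `|G : ι(M)|` is a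
power of `2`, and the permutation module `k[G/ι(M)]` is indecomposable. -/
theorem statement17 (n : ℕ) (hn : 3 ≤ n)
    (M : Type*) [Group M] [Finite M] (hM : Nat.card M = 3 * 2 ^ n)
    (P : Subgroup M) (hsyl : IsSylowIn 2 ⊤ P)
    (k : Type*) [Field k] [IsAlgClosed k] [CharP k 2] :
    (∃ m : ℕ, ((parkEmbed M P).range : Subgroup ↥(parkGroup M P)).index = 2 ^ m) ∧
      IsIndecomposableModule (MonoidAlgebra k ↥(parkGroup M P))
        (PermutationModule k ↥(parkGroup M P)
          (↥(parkGroup M P) ⧸ (parkEmbed M P).range)) := by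
  exact ⟨⟨2 * n + 1, park_index n M hM P hsyl⟩,
    perm_module_indecomposable (2 * n + 1) (park_index n M hM P hsyl)⟩
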